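/- For γ > 1 define ω(k) = k·√(γ + 1/(1+k²)). For every k₀ > 0 and δ > 0 small enough, there exists a constant C > 0 such that for all k with |k| ≤ δ and all ℓ with |ℓ − k₀| ≤ δ or |ℓ + k₀| ≤ δ, and all j ∈ {−1, 0, 1}: |−j·ω(k) − ω(k−ℓ) − ω(ℓ)| ≥ C·|k|. -/

import Mathlib

noncomputable def omg (γ x : ℝ) : ℝ := x * Real.sqrt (γ + 1 / (1 + x ^ 2))

noncomputable def omg' (γ x : ℝ) : ℝ :=
  Real.sqrt (γ + 1 / (1 + x ^ 2)) -
    x ^ 2 / ((1 + x ^ 2) ^ 2 * Real.sqrt (γ + 1 / (1 + x ^ 2)))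

lemma one_add_sq_pos (x : ℝ) : (0:ℝ) < 1 + x ^ 2 := by positivity

lemma arg_pos (γ : ℝ) (hγ : 1 < γ) (x : ℝ) : 0 < γ + 1 / (1 + x ^ 2) := by
  have := one_add_sq_pos x; positivity

lemma sqrt_pos' (γ : ℝ) (hγ : 1 < γ) (x : ℝ) :
    0 < Real.sqrt (γ + 1 / (1 + x ^ 2)) :=
  Real.sqrt_pos.2 (arg_pos γ hγ x)

lemma hasDerivAt_omg (γ : ℝ) (hγ : 1 < γ) (x : ℝ) :
    HasDerivAt (omg γ) (omg' γ x) x := by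
  have h1 : HasDerivAt (fun x : ℝ => 1 + x ^ 2) (2 * x) x := by
    simpa using ((hasDerivAt_pow 2 x).const_add 1)
  have hne : (1 + x ^ 2) ≠ 0 := (one_add_sq_pos x).ne'
  have h2 : HasDerivAt (fun x : ℝ => γ + 1 / (1 + x ^ 2))
      (-(2 * x) / (1 + x ^ 2) ^ 2) x := by
    simpa [one_div] using ((h1.inv hne).const_add γ)
  have hs : Real.sqrt (γ + 1 / (1 + x ^ 2)) ≠ 0 := (sqrt_pos' γ hγ x).ne'
  have h3 := h2.sqrt (arg_pos γ hγ x).ne'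
  have h4 : HasDerivAt (omg γ) _ x := (hasDerivAt_id x).mul h3
  convert h4 using 1
  unfold omg' id
  field_simp
  ring

lemma sqrt_le (γ : ℝ) (hγ : 1 < γ) (x : ℝ) :
    Real.sqrt (γ + 1 / (1 + x ^ 2)) ≤ Real.sqrt (γ + 1) := by
  apply Real.sqrt_le_sqrt
  have h := one_add_sq_pos x
  have : 1 / (1 + x ^ 2) ≤ 1 := by
    rw [div_le_one h]; nlinarith
  linarith

lemma omg'_lower (γ : ℝ) (hγ : 1 < γ) (x : ℝ) :
    (γ - 1/4) / Real.sqrt (γ + 1) ≤ omg' γ x := by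
  have hs := sqrt_pos' γ hγ x
  have hsq : Real.sqrt (γ + 1 / (1 + x ^ 2)) ^ 2 = γ + 1 / (1 + x ^ 2) :=
    Real.sq_sqrt (arg_pos γ hγ x).le
  have hQ : 0 < Real.sqrt (γ + 1) := Real.sqrt_pos.2 (by linarith)
  have hle := sqrt_le γ hγ x
  have h1 := one_add_sq_pos x
  have hu : 0 < 1 / (1 + x ^ 2) := by positivity
  have hx4 : x ^ 2 / (1 + x ^ 2) ^ 2 ≤ 1/4 := by
    rw [div_le_iff₀ (by positivity)]; nlinarith [sq_nonneg (1 - x ^ 2)]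
  set s := Real.sqrt (γ + 1 / (1 + x ^ 2)) with hsdef
  have key : omg' γ x = (γ + 1 / (1 + x ^ 2) - x ^ 2 / (1 + x ^ 2) ^ 2) / s := by
    rw [← hsq]
    unfold omg'
    rw [← hsdef]
    field_simp
  rw [key]
  exact div_le_div₀ (by linarith) (by linarith) hs hle

lemma omg'_pos (γ : ℝ) (hγ : 1 < γ) (x : ℝ) : 0 < omg' γ x := by
  have h := omg'_lower γ hγ x
  have hQ : 0 < Real.sqrt (γ + 1) := Real.sqrt_pos.2 (by linarith)
  have : 0 < (γ - 1/4) / Real.sqrt (γ + 1) := div_pos (by linarith) hQ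
  linarith

/-- Upper bound for `omg'` on `[k₀/2, 2k₀]`. -/
lemma omg'_upper (γ : ℝ) (hγ : 1 < γ) (k₀ : ℝ) (hk₀ : 0 < k₀) (x : ℝ)
    (hx1 : k₀/2 ≤ x) (hx2 : x ≤ 2*k₀) :
    omg' γ x ≤ Real.sqrt (γ + 1) - k₀^2 / (4 * (1 + 4*k₀^2)^2 * Real.sqrt (γ + 1)) := by
  have hs := sqrt_pos' γ hγ x
  have hQ : 0 < Real.sqrt (γ + 1) := Real.sqrt_pos.2 (by linarith)
  have hle := sqrt_le γ hγ x
  have h1 := one_add_sq_pos x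
  have hxpos : 0 < x := lt_of_lt_of_le (by linarith) hx1
  have hx2' : x^2 ≤ 4*k₀^2 := by nlinarith
  have hx1' : k₀^2/4 ≤ x^2 := by nlinarith
  have hden : (1 + x^2)^2 * Real.sqrt (γ + 1 / (1 + x ^ 2)) ≤
      (1 + 4*k₀^2)^2 * Real.sqrt (γ + 1) := by
    apply mul_le_mul (by nlinarith) hle hs.le (by positivity)
  have hterm : k₀^2 / (4 * (1 + 4*k₀^2)^2 * Real.sqrt (γ + 1)) ≤
      x ^ 2 / ((1 + x ^ 2) ^ 2 * Real.sqrt (γ + 1 / (1 + x ^ 2))) := by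
    rw [div_le_div_iff₀ (by positivity) (by positivity)]
    calc k₀^2 * ((1 + x ^ 2) ^ 2 * Real.sqrt (γ + 1 / (1 + x ^ 2)))
        ≤ k₀^2 * ((1 + 4*k₀^2)^2 * Real.sqrt (γ + 1)) := by
          apply mul_le_mul_of_nonneg_left hden (by positivity)
      _ ≤ x ^ 2 * (4 * (1 + 4*k₀^2)^2 * Real.sqrt (γ + 1)) := by
          nlinarith [mul_le_mul_of_nonneg_right hx1'
            (show (0:ℝ) ≤ 4*(1+4*k₀^2)^2*Real.sqrt (γ+1) by positivity)]
  unfold omg'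
  linarith

/-- Global lower Lipschitz bound. -/
lemma omg_lower_lip (γ : ℝ) (hγ : 1 < γ) (a b : ℝ) :
    (γ - 1/4) / Real.sqrt (γ + 1) * |a - b| ≤ |omg γ a - omg γ b| := by
  set m := (γ - 1/4) / Real.sqrt (γ + 1) with hm
  have hmono : Monotone (fun x => omg γ x - m * x) := by
    apply monotone_of_deriv_nonneg
    · intro x
      exact ((hasDerivAt_omg γ hγ x).sub ((hasDerivAt_id x).const_mul m)).differentiableAt
    · intro x
      have hd : HasDerivAt (fun x => omg γ x - m * x) (omg' γ x - m * 1) x :=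
        (hasDerivAt_omg γ hγ x).sub ((hasDerivAt_id x).const_mul m)
      rw [hd.deriv]
      have := omg'_lower γ hγ x
      simp only [mul_one]
      linarith
  rcases le_total a b with h | h
  · have := hmono h
    simp only at this
    have h2 : m * (b - a) ≤ omg γ b - omg γ a := by linarith
    rw [abs_sub_comm (omg γ a), abs_sub_comm a]
    rw [abs_of_nonneg (by linarith), abs_of_nonneg _]
    · linarith
    · have hm0 : 0 ≤ m := by
        rw [hm]
        have hQ : 0 < Real.sqrt (γ + 1) := Real.sqrt_pos.2 (by linarith)
        exact div_nonneg (by linarith) hQ.le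
      nlinarith [mul_nonneg hm0 (sub_nonneg.2 h)]
  · have := hmono h
    simp only at this
    have h2 : m * (a - b) ≤ omg γ a - omg γ b := by linarith
    rw [abs_of_nonneg (by linarith), abs_of_nonneg _]
    · linarith
    · have hm0 : 0 ≤ m := by
        rw [hm]
        have hQ : 0 < Real.sqrt (γ + 1) := Real.sqrt_pos.2 (by linarith)
        exact div_nonneg (by linarith) hQ.le
      nlinarith [mul_nonneg hm0 (sub_nonneg.2 h)]

/-- Upper Lipschitz bound on `[k₀/2, 2k₀]`. -/
lemma omg_upper_lip (γ : ℝ) (hγ : 1 < γ) (k₀ : ℝ) (hk₀ : 0 < k₀) (a b : ℝ)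
    (ha : a ∈ Set.Icc (k₀/2) (2*k₀)) (hb : b ∈ Set.Icc (k₀/2) (2*k₀)) :
    |omg γ a - omg γ b| ≤
      (Real.sqrt (γ + 1) - k₀^2 / (4 * (1 + 4*k₀^2)^2 * Real.sqrt (γ + 1))) * |a - b| := by
  have := (convex_Icc (k₀/2) (2*k₀)).norm_image_sub_le_of_norm_hasDerivWithin_le
    (f := omg γ) (f' := omg' γ)
    (fun x _ => (hasDerivAt_omg γ hγ x).hasDerivWithinAt)
    (fun x hx => by
      rw [Real.norm_eq_abs, abs_of_pos (omg'_pos γ hγ x)]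
      exact omg'_upper γ hγ k₀ hk₀ x hx.1 hx.2) hb ha
  simpa [Real.norm_eq_abs] using this

lemma omg_odd (γ x : ℝ) : omg γ (-x) = -omg γ x := by
  unfold omg; rw [neg_pow]; ring_nf

/-- Near zero: `√(γ+1/(1+k²)) ≥ √(γ+1) - k²` for `|k| ≤ 1`. -/
lemma sqrt_near_zero (γ : ℝ) (hγ : 1 < γ) (k : ℝ) (hk : |k| ≤ 1) :
    Real.sqrt (γ + 1) - k^2 ≤ Real.sqrt (γ + 1 / (1 + k ^ 2)) := by
  have h1 := one_add_sq_pos k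
  have hk2 : k^2 ≤ 1 := by nlinarith [abs_nonneg k, sq_abs k, abs_le.1 hk]
  have hQ : 0 < Real.sqrt (γ + 1) := Real.sqrt_pos.2 (by linarith)
  have hQ2 : Real.sqrt (γ + 1) ^ 2 = γ + 1 := Real.sq_sqrt (by linarith)
  have hQge : 1 ≤ Real.sqrt (γ + 1) := by nlinarith
  rcases le_or_gt (Real.sqrt (γ + 1) - k^2) 0 with h | h
  · exact h.trans (sqrt_pos' γ hγ k).le
  · rw [show Real.sqrt (γ+1) - k^2 = Real.sqrt ((Real.sqrt (γ+1) - k^2)^2) by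
      rw [Real.sqrt_sq h.le]]
    apply Real.sqrt_le_sqrt
    have hlow : 1 - k^2 ≤ 1 / (1 + k ^ 2) := by
      rw [le_div_iff₀ h1]; nlinarith
    nlinarith

set_option maxHeartbeats 1000000 in
/-- Main estimate when `ℓ` is near `+k₀`. -/
lemma key_pos (γ : ℝ) (hγ : 1 < γ) (k₀ : ℝ) (hk₀ : 0 < k₀) (δ : ℝ)
    (hδ1 : δ ≤ 1) (hδk : δ ≤ k₀/4)
    (hδc : δ^2 ≤ k₀^2 / (4 * (1 + 4*k₀^2)^2 * Real.sqrt (γ + 1)) / 2)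
    (k ℓ : ℝ) (hk : |k| ≤ δ) (hℓ : |ℓ - k₀| ≤ δ) (j : ℤ)
    (hj : j = -1 ∨ j = 0 ∨ j = 1) :
    min ((γ - 1/4) / Real.sqrt (γ + 1))
        (k₀^2 / (4 * (1 + 4*k₀^2)^2 * Real.sqrt (γ + 1)) / 2) * |k| ≤
      |(-(j : ℝ)) * omg γ k - omg γ (k - ℓ) - omg γ ℓ| := by
  have hQ : 0 < Real.sqrt (γ + 1) := Real.sqrt_pos.2 (by linarith)
  set Q := Real.sqrt (γ + 1) with hQdef
  set m := (γ - 1/4) / Q with hmdef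
  have hm : 0 < m := div_pos (by linarith) hQ
  set c := k₀^2 / (4 * (1 + 4*k₀^2)^2 * Q) with hcdef
  have hc : 0 < c := by positivity
  set L := Q - c with hLdef
  replace hδc : δ^2 ≤ c/2 := hδc
  clear_value Q m c L
  have hkabs := abs_le.1 hk
  have hℓabs := abs_le.1 (hℓ)
  have hℓI : ℓ ∈ Set.Icc (k₀/2) (2*k₀) := ⟨by linarith, by linarith⟩
  have hℓkI : ℓ - k ∈ Set.Icc (k₀/2) (2*k₀) := ⟨by linarith, by linarith⟩
  have hodd : omg γ (k - ℓ) = - omg γ (ℓ - k) := by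
    rw [show k - ℓ = -(ℓ - k) by ring, omg_odd]
  have hdiff : |omg γ (ℓ - k) - omg γ ℓ| ≤ L * |k| := by
    have h := omg_upper_lip γ hγ k₀ hk₀ (ℓ - k) ℓ hℓkI hℓI
    rw [show ℓ - k - ℓ = -k by ring, abs_neg] at h
    rw [hLdef, hcdef, hQdef]
    exact h
  have hdiff' : m * |k| ≤ |omg γ (ℓ - k) - omg γ ℓ| := by
    have h := omg_lower_lip γ hγ (ℓ - k) ℓ
    rw [show ℓ - k - ℓ = -k by ring, abs_neg] at h
    rw [hmdef, hQdef]
    exact h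
  have homgk : (Q - δ^2) * |k| ≤ |omg γ k| := by
    have hk1 : |k| ≤ 1 := hk.trans hδ1
    have hs := sqrt_near_zero γ hγ k hk1
    have hk2 : k^2 ≤ δ^2 := by nlinarith [abs_nonneg k, sq_abs k]
    have hrw : |omg γ k| = |k| * Real.sqrt (γ + 1 / (1 + k ^ 2)) := by
      rw [omg, abs_mul, abs_of_pos (sqrt_pos' γ hγ k)]
    rw [hrw, hQdef]
    have := abs_nonneg k
    nlinarith
  have hmin1 : min m (c/2) ≤ m := min_le_left _ _
  have hmin2 : min m (c/2) ≤ c/2 := min_le_right _ _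
  have h1 : min m (c/2) * |k| ≤ (c/2) * |k| :=
    mul_le_mul_of_nonneg_right hmin2 (abs_nonneg k)
  have h1' : min m (c/2) * |k| ≤ m * |k| :=
    mul_le_mul_of_nonneg_right hmin1 (abs_nonneg k)
  have h2 : δ^2 * |k| ≤ (c/2) * |k| :=
    mul_le_mul_of_nonneg_right hδc (abs_nonneg k)
  have h3 : L * |k| = Q * |k| - c * |k| := by rw [hLdef]; ring
  have h4 : (Q - δ^2) * |k| = Q * |k| - δ^2 * |k| := by ring
  rcases hj with hj | hj | hj
  · -- j = -1
    subst hj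
    rw [show (-(((-1:ℤ)):ℝ)) * omg γ k - omg γ (k - ℓ) - omg γ ℓ
        = omg γ k + (omg γ (ℓ - k) - omg γ ℓ) from by push_cast; rw [hodd]; ring]
    have htri : |omg γ k| - |omg γ (ℓ - k) - omg γ ℓ| ≤
        |omg γ k + (omg γ (ℓ - k) - omg γ ℓ)| := by
      have h := abs_add_le (omg γ k + (omg γ (ℓ - k) - omg γ ℓ)) (-(omg γ (ℓ - k) - omg γ ℓ))
      simp only [add_neg_cancel_right, abs_neg] at h
      linarith
    linarith
  · -- j = 0
    subst hj
    rw [show (-(((0:ℤ)):ℝ)) * omg γ k - omg γ (k - ℓ) - omg γ ℓ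
        = omg γ (ℓ - k) - omg γ ℓ from by push_cast; rw [hodd]; ring]
    linarith
  · -- j = 1
    subst hj
    rw [show (-(((1:ℤ)):ℝ)) * omg γ k - omg γ (k - ℓ) - omg γ ℓ
        = -omg γ k + (omg γ (ℓ - k) - omg γ ℓ) from by push_cast; rw [hodd]; ring]
    have htri : |omg γ k| - |omg γ (ℓ - k) - omg γ ℓ| ≤
        |-omg γ k + (omg γ (ℓ - k) - omg γ ℓ)| := by
      have h := abs_add_le (-omg γ k + (omg γ (ℓ - k) - omg γ ℓ)) (-(omg γ (ℓ - k) - omg γ ℓ))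
      simp only [add_neg_cancel_right, abs_neg] at h
      have h2' : |-omg γ k| = |omg γ k| := abs_neg _
      linarith
    linarith
theorem stmt16 (γ : ℝ) (hγ : 1 < γ) (k₀ : ℝ) (hk₀ : 0 < k₀) :
    ∃ δ₀ > (0:ℝ), ∀ δ : ℝ, 0 < δ → δ ≤ δ₀ → ∃ C > (0:ℝ),
      ∀ k ℓ : ℝ, |k| ≤ δ → (|ℓ - k₀| ≤ δ ∨ |ℓ + k₀| ≤ δ) →
        ∀ j : ℤ, (j = -1 ∨ j = 0 ∨ j = 1) →
          C * |k| ≤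
            |(-(j : ℝ)) * (k * Real.sqrt (γ + 1 / (1 + k ^ 2))) -
              (k - ℓ) * Real.sqrt (γ + 1 / (1 + (k - ℓ) ^ 2)) -
              ℓ * Real.sqrt (γ + 1 / (1 + ℓ ^ 2))| := by
  have hQ : 0 < Real.sqrt (γ + 1) := Real.sqrt_pos.2 (by linarith)
  set Q := Real.sqrt (γ + 1) with hQdef
  set m := (γ - 1/4) / Q with hmdef
  have hm : 0 < m := div_pos (by linarith) hQ
  set c := k₀^2 / (4 * (1 + 4*k₀^2)^2 * Q) with hcdef
  have hc : 0 < c := by positivity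
  refine ⟨min (k₀/4) (min 1 (Real.sqrt (c/2))), by positivity, ?_⟩
  intro δ hδ hδle
  refine ⟨min m (c/2), lt_min hm (by positivity), ?_⟩
  have hδk : δ ≤ k₀/4 := hδle.trans (min_le_left _ _)
  have hδ1 : δ ≤ 1 := hδle.trans ((min_le_right _ _).trans (min_le_left _ _))
  have hδc : δ^2 ≤ c/2 := by
    have h := hδle.trans ((min_le_right _ _).trans (min_le_right _ _))
    have := Real.sq_sqrt (by positivity : (0:ℝ) ≤ c/2)
    nlinarith
  have key := key_pos γ hγ k₀ hk₀ δ hδ1 hδk hδc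
  intro k ℓ hk hℓ j hj
  rw [show (-(j : ℝ)) * (k * Real.sqrt (γ + 1 / (1 + k ^ 2))) -
      (k - ℓ) * Real.sqrt (γ + 1 / (1 + (k - ℓ) ^ 2)) -
      ℓ * Real.sqrt (γ + 1 / (1 + ℓ ^ 2)) =
      (-(j : ℝ)) * omg γ k - omg γ (k - ℓ) - omg γ ℓ from by simp only [omg]]
  rcases hℓ with hℓ | hℓ
  · exact key k ℓ hk hℓ j hj
  · have h := key (-k) (-ℓ) (by rwa [abs_neg]) (by rw [show -ℓ - k₀ = -(ℓ + k₀) by ring, abs_neg]; exact hℓ) j hj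
    rw [abs_neg] at h
    have hEneg : (-(j : ℝ)) * omg γ (-k) - omg γ (-k - -ℓ) - omg γ (-ℓ)
        = -((-(j : ℝ)) * omg γ k - omg γ (k - ℓ) - omg γ ℓ) := by
      rw [show -k - -ℓ = -(k - ℓ) by ring, omg_odd, omg_odd, omg_odd]
      ring
    rw [hEneg, abs_neg] at h
    exact h
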